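/- Let (ψ, ψ_2, …, ψ_K) be an orthonormal family in ℂ^d and let n ≥ 1. For μ = 1, …, n let λ_μ ∈ (0,1] and let p_{k,μ} ≥ 0 (k = 2,…,K) satisfy ∑_k p_{k,μ} = 1, and define ρ_μ = λ_μ·|ψ⟩⟨ψ| + (1−λ_μ)·∑_{k=2}^K p_{k,μ}·|ψ_k⟩⟨ψ_k|. Then for every d×d complex matrix σ: Tr[(ρ_1 ρ_2 ⋯ ρ_n)·σ] = (∏_{μ=1}^n λ_μ)·⟨ψ, σψ⟩ + ∑_{k=2}^K (∏_{μ=1}^n (1−λ_μ)·p_{k,μ})·⟨ψ_k, σψ_k⟩. Moreover, if ‖σ‖ ≤ 1 (operator norm), λ_min := min_μ λ_μ, and p_{k,max} := max_μ p_{k,μ}, then |Tr[(ρ_1⋯ρ_n)σ]/(∏_μ λ_μ) − ⟨ψ, σψ⟩| ≤ ((1−λ_min)/λ_min)^n · ∑_{k=2}^K p_{k,max}^n. -/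

import Mathlib

open Matrix BigOperators

lemma vmv_mul {d : ℕ} (a b c e : Fin d → ℂ) :
    vecMulVec a (star b) * vecMulVec c (star e)
      = (star b ⬝ᵥ c) • vecMulVec a (star e) := by
  ext i j
  simp only [Matrix.mul_apply, vecMulVec_apply, Matrix.smul_apply, dotProduct, smul_eq_mul,
    Finset.sum_mul, Finset.mul_sum]
  refine Finset.sum_congr rfl fun m _ => by ring

lemma trace_vmv {d : ℕ} (v w : Fin d → ℂ) (σ : Matrix (Fin d) (Fin d) ℂ) :
    (vecMulVec v (star w) * σ).trace = star w ⬝ᵥ σ.mulVec v := by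
  simp only [Matrix.trace, Matrix.diag, Matrix.mul_apply, vecMulVec_apply, dotProduct,
    mulVec, Finset.mul_sum]
  rw [Finset.sum_comm]
  refine Finset.sum_congr rfl fun m _ => Finset.sum_congr rfl fun i _ => by ring

section M
variable {d K : ℕ} (ψ : Fin d → ℂ) (ψe : Fin K → Fin d → ℂ)

noncomputable def Mmat (a : ℂ) (c : Fin K → ℂ) : Matrix (Fin d) (Fin d) ℂ :=
  a • vecMulVec ψ (star ψ) + ∑ k, c k • vecMulVec (ψe k) (star (ψe k))

variable (hψ : star ψ ⬝ᵥ ψ = 1)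
    (horth : ∀ k, star ψ ⬝ᵥ ψe k = 0)
    (he : ∀ k l, star (ψe k) ⬝ᵥ ψe l = if k = l then 1 else 0)

include hψ horth he in
lemma Mmat_mul (a b : ℂ) (c e : Fin K → ℂ) :
    Mmat ψ ψe a c * Mmat ψ ψe b e = Mmat ψ ψe (a * b) (fun k => c k * e k) := by
  have horth' : ∀ k, star (ψe k) ⬝ᵥ ψ = 0 := by
    intro k
    have := congrArg star (horth k)
    rwa [star_dotProduct, star_star, star_zero] at this
  simp only [Mmat, add_mul, mul_add, Finset.sum_mul, Finset.mul_sum, smul_mul_smul_comm,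
    vmv_mul, hψ, horth, horth', he, one_smul, zero_smul, smul_zero, Finset.sum_const_zero,
    add_zero, zero_add, smul_smul]
  congr 1
  rw [Finset.sum_comm]
  refine Finset.sum_congr rfl fun k _ => ?_
  rw [Finset.sum_eq_single k]
  · simp [mul_comm]
  · intro l _ hl; simp [if_neg (Ne.symm hl)]
  · simp
end M

section P
variable {d K : ℕ} {ψ : Fin d → ℂ} {ψe : Fin K → Fin d → ℂ}
    (hψ : star ψ ⬝ᵥ ψ = 1)
    (horth : ∀ k, star ψ ⬝ᵥ ψe k = 0)
    (he : ∀ k l, star (ψe k) ⬝ᵥ ψe l = if k = l then 1 else 0)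

include hψ horth he in
lemma Mmat_prod : ∀ (n : ℕ) (a : Fin (n+1) → ℂ) (c : Fin K → Fin (n+1) → ℂ),
    (List.ofFn (fun μ => Mmat ψ ψe (a μ) (fun k => c k μ))).prod
      = Mmat ψ ψe (∏ μ, a μ) (fun k => ∏ μ, c k μ) := by
  intro n
  induction n with
  | zero => intro a c; simp
  | succ m ih =>
      intro a c
      rw [List.ofFn_succ, List.prod_cons,
        ih (fun μ => a μ.succ) (fun k μ => c k μ.succ),
        Mmat_mul ψ ψe hψ horth he]
      simp [Fin.prod_univ_succ]

lemma Mmat_trace (a : ℂ) (c : Fin K → ℂ) (σ : Matrix (Fin d) (Fin d) ℂ) :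
    (Mmat ψ ψe a c * σ).trace
      = a * (star ψ ⬝ᵥ σ.mulVec ψ) + ∑ k, c k * (star (ψe k) ⬝ᵥ σ.mulVec (ψe k)) := by
  simp [Mmat, add_mul, Finset.sum_mul, trace_add, trace_sum, smul_mul_assoc, trace_smul,
    trace_vmv, smul_eq_mul]
end P

set_option synthInstance.maxHeartbeats 1000000 in
lemma abs_quad_le {d : ℕ} (σ : Matrix (Fin d) (Fin d) ℂ)
    (hσ : ‖Matrix.toEuclideanCLM (𝕜 := ℂ) σ‖ ≤ 1)
    (v : Fin d → ℂ) (hv : star v ⬝ᵥ v = 1) :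
    ‖star v ⬝ᵥ σ.mulVec v‖ ≤ 1 := by
  set x : EuclideanSpace ℂ (Fin d) := (WithLp.equiv 2 _).symm v with hx
  have hinner : star v ⬝ᵥ σ.mulVec v = @inner ℂ _ _ x (Matrix.toEuclideanCLM (𝕜 := ℂ) σ x) := by
    rw [hx, WithLp.equiv_symm_apply, Matrix.toEuclideanCLM_toLp, EuclideanSpace.inner_toLp_toLp,
      dotProduct_comm]
  have hxx : @inner ℂ _ _ x x = 1 := by
    rw [hx, WithLp.equiv_symm_apply, EuclideanSpace.inner_toLp_toLp, dotProduct_comm, hv]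
  have hnx : ‖x‖ = 1 := by
    have h1 : ‖x‖ ^ 2 = 1 := by
      have := inner_self_eq_norm_sq (𝕜 := ℂ) x
      rw [hxx] at this
      simpa using this.symm
    nlinarith [norm_nonneg x]
  calc ‖star v ⬝ᵥ σ.mulVec v‖
      = ‖@inner ℂ _ _ x (Matrix.toEuclideanCLM (𝕜 := ℂ) σ x)‖ := by
        rw [hinner]
    _ ≤ ‖x‖ * ‖Matrix.toEuclideanCLM (𝕜 := ℂ) σ x‖ := norm_inner_le_norm _ _
    _ ≤ ‖x‖ * (‖Matrix.toEuclideanCLM (𝕜 := ℂ) σ‖ * ‖x‖) :=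
        mul_le_mul_of_nonneg_left ((Matrix.toEuclideanCLM (𝕜 := ℂ) σ).le_opNorm x)
          (norm_nonneg x)
    _ ≤ 1 := by rw [hnx]; simpa using hσ


/-- commuting case of the lemma on non-identical copies: for copies
`ρ_μ = λ_μ|ψ⟩⟨ψ| + (1−λ_μ)∑_k p_{k,μ}|ψ_k⟩⟨ψ_k|` sharing the orthonormal eigenvectors
`(ψ, ψ_2, …, ψ_K)`: `Tr[(ρ_1⋯ρ_n)σ] = (∏_μ λ_μ)⟨ψ,σψ⟩ + ∑_k (∏_μ (1−λ_μ)p_{k,μ})⟨ψ_k,σψ_k⟩`;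
moreover if `‖σ‖ ≤ 1`, `λ_min = min_μ λ_μ` and `p_{k,max} = max_μ p_{k,μ}`, then
`|Tr[(ρ_1⋯ρ_n)σ]/(∏_μ λ_μ) − ⟨ψ,σψ⟩| ≤ ((1−λ_min)/λ_min)^n ∑_k p_{k,max}^n`. -/
theorem nonidentical_commuting_copies {d K : ℕ} (n : ℕ) (hn : 1 ≤ n)
    (ψ : Fin d → ℂ) (ψe : Fin K → Fin d → ℂ)
    (hψ : star ψ ⬝ᵥ ψ = 1)
    (horth : ∀ k, star ψ ⬝ᵥ ψe k = 0)
    (he : ∀ k l, star (ψe k) ⬝ᵥ ψe l = if k = l then 1 else 0)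
    (lam : Fin n → ℝ) (hlam : ∀ μ, lam μ ∈ Set.Ioc (0 : ℝ) 1)
    (p : Fin K → Fin n → ℝ) (hp : ∀ k μ, 0 ≤ p k μ)
    (hsum : ∀ μ, ∑ k, p k μ = 1)
    (σ : Matrix (Fin d) (Fin d) ℂ) :
    let ρ : Fin n → Matrix (Fin d) (Fin d) ℂ := fun μ =>
      (lam μ : ℂ) • vecMulVec ψ (star ψ) +
        ((1 : ℂ) - (lam μ : ℂ)) • ∑ k, (p k μ : ℂ) • vecMulVec (ψe k) (star (ψe k))
    (((List.ofFn ρ).prod * σ).trace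
        = (∏ μ, (lam μ : ℂ)) * (star ψ ⬝ᵥ σ.mulVec ψ) +
          ∑ k, (∏ μ, ((1 : ℂ) - (lam μ : ℂ)) * (p k μ : ℂ)) *
            (star (ψe k) ⬝ᵥ σ.mulVec (ψe k))) ∧
    (‖Matrix.toEuclideanCLM (𝕜 := ℂ) σ‖ ≤ 1 →
      ∀ lmin : ℝ, IsLeast (Set.range lam) lmin →
      ∀ pmax : Fin K → ℝ, (∀ k, IsGreatest (Set.range (p k)) (pmax k)) →
      ‖((List.ofFn ρ).prod * σ).trace / (∏ μ, (lam μ : ℂ)) -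
          star ψ ⬝ᵥ σ.mulVec ψ‖
        ≤ ((1 - lmin) / lmin) ^ n * ∑ k, pmax k ^ n) := by
  obtain ⟨m, rfl⟩ : ∃ m, n = m + 1 := ⟨n - 1, (Nat.succ_pred_eq_of_pos hn).symm⟩
  intro ρ
  have hρ : ρ = fun μ => Mmat ψ ψe ((lam μ : ℂ))
      (fun k => ((1 : ℂ) - (lam μ : ℂ)) * (p k μ : ℂ)) := by
    funext μ
    show (lam μ : ℂ) • vecMulVec ψ (star ψ) + _ = _
    simp only [Mmat, Finset.smul_sum]
    congr 1
    exact Finset.sum_congr rfl fun k _ => (smul_smul _ _ _)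
  have hprod : (List.ofFn ρ).prod
      = Mmat ψ ψe (∏ μ, (lam μ : ℂ))
        (fun k => ∏ μ, ((1 : ℂ) - (lam μ : ℂ)) * (p k μ : ℂ)) := by
    rw [hρ]
    exact Mmat_prod hψ horth he m (fun μ => (lam μ : ℂ))
      (fun k μ => ((1 : ℂ) - (lam μ : ℂ)) * (p k μ : ℂ))
  have part1 : ((List.ofFn ρ).prod * σ).trace
      = (∏ μ, (lam μ : ℂ)) * (star ψ ⬝ᵥ σ.mulVec ψ) +
        ∑ k, (∏ μ, ((1 : ℂ) - (lam μ : ℂ)) * (p k μ : ℂ)) *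
          (star (ψe k) ⬝ᵥ σ.mulVec (ψe k)) := by
    rw [hprod, Mmat_trace]
  refine ⟨part1, ?_⟩
  intro hσ lmin hlmin pmax hpmax
  -- basic positivity facts
  obtain ⟨μ₀, hμ₀⟩ := hlmin.1
  have hlmin_pos : 0 < lmin := hμ₀ ▸ (hlam μ₀).1
  have hlmin_le1 : lmin ≤ 1 := hμ₀ ▸ (hlam μ₀).2
  have hpmax_nonneg : ∀ k, 0 ≤ pmax k := by
    intro k; obtain ⟨μ, hμ⟩ := (hpmax k).1; exact hμ ▸ hp k μ
  have hΛ0 : (∏ μ, (lam μ : ℂ)) ≠ 0 := by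
    refine Finset.prod_ne_zero_iff.2 fun μ _ => ?_
    exact Complex.ofReal_ne_zero.2 (ne_of_gt (hlam μ).1)
  have hratio_nonneg : 0 ≤ (1 - lmin) / lmin :=
    div_nonneg (by linarith) hlmin_pos.le
  -- rewrite the difference as a single sum
  have hdiff : ((List.ofFn ρ).prod * σ).trace / (∏ μ, (lam μ : ℂ)) -
        star ψ ⬝ᵥ σ.mulVec ψ
      = ∑ k, ((∏ μ, ((1 : ℂ) - (lam μ : ℂ)) * (p k μ : ℂ)) / (∏ μ, (lam μ : ℂ))) *
          (star (ψe k) ⬝ᵥ σ.mulVec (ψe k)) := by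
    rw [part1, add_div, mul_div_cancel_left₀ _ hΛ0, add_sub_cancel_left, Finset.sum_div]
    exact Finset.sum_congr rfl fun k _ => (mul_div_right_comm _ _ _)
  rw [hdiff]
  calc ‖∑ k, ((∏ μ, ((1 : ℂ) - (lam μ : ℂ)) * (p k μ : ℂ)) /
          (∏ μ, (lam μ : ℂ))) * (star (ψe k) ⬝ᵥ σ.mulVec (ψe k))‖
      ≤ ∑ k, ‖((∏ μ, ((1 : ℂ) - (lam μ : ℂ)) * (p k μ : ℂ)) /
          (∏ μ, (lam μ : ℂ))) * (star (ψe k) ⬝ᵥ σ.mulVec (ψe k))‖ :=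
        norm_sum_le _ _
    _ ≤ ∑ k, ((1 - lmin) / lmin * pmax k) ^ (m + 1) := by
        refine Finset.sum_le_sum fun k _ => ?_
        rw [norm_mul]
        have hik : ‖star (ψe k) ⬝ᵥ σ.mulVec (ψe k)‖ ≤ 1 :=
          abs_quad_le σ hσ (ψe k) (by simpa using he k k)
        have hck : ‖(∏ μ, ((1 : ℂ) - (lam μ : ℂ)) * (p k μ : ℂ)) /
              (∏ μ, (lam μ : ℂ))‖
            = ∏ μ, (1 - lam μ) * p k μ / lam μ := by
          rw [norm_div]
          have h1 : (∏ μ, ((1 : ℂ) - (lam μ : ℂ)) * (p k μ : ℂ))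
              = ((∏ μ, (1 - lam μ) * p k μ : ℝ) : ℂ) := by push_cast; ring
          have h2 : (∏ μ, (lam μ : ℂ)) = ((∏ μ, lam μ : ℝ) : ℂ) := by push_cast; ring
          rw [h1, h2, Complex.norm_real, Complex.norm_real, Real.norm_eq_abs, Real.norm_eq_abs,
            abs_of_nonneg (Finset.prod_nonneg fun μ _ =>
              mul_nonneg (by linarith [(hlam μ).2]) (hp k μ)),
            abs_of_nonneg (Finset.prod_nonneg fun μ _ => (hlam μ).1.le),
            ← Finset.prod_div_distrib]
        have hterm : ∏ μ, (1 - lam μ) * p k μ / lam μ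
            ≤ ((1 - lmin) / lmin * pmax k) ^ (m + 1) := by
          have h := Finset.prod_le_prod (s := Finset.univ)
            (f := fun μ : Fin (m+1) => (1 - lam μ) * p k μ / lam μ)
            (g := fun _ => (1 - lmin) / lmin * pmax k) ?_ ?_
          · simpa [Finset.prod_const] using h
          all_goals intro μ _
          · exact div_nonneg (mul_nonneg (by linarith [(hlam μ).2]) (hp k μ)) (hlam μ).1.le
          · have hlmin_le : lmin ≤ lam μ := hlmin.2 ⟨μ, rfl⟩
            have hple : p k μ ≤ pmax k := (hpmax k).2 ⟨μ, rfl⟩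
            have hratio : (1 - lam μ) / lam μ ≤ (1 - lmin) / lmin := by
              rw [div_le_div_iff₀ (hlam μ).1 hlmin_pos]
              nlinarith
            calc (1 - lam μ) * p k μ / lam μ = (1 - lam μ) / lam μ * p k μ := by ring
              _ ≤ (1 - lmin) / lmin * pmax k :=
                  mul_le_mul hratio hple (hp k μ)
                    hratio_nonneg
        calc ‖(∏ μ, ((1 : ℂ) - (lam μ : ℂ)) * (p k μ : ℂ)) /
              (∏ μ, (lam μ : ℂ))‖ * ‖star (ψe k) ⬝ᵥ σ.mulVec (ψe k)‖
            ≤ ‖(∏ μ, ((1 : ℂ) - (lam μ : ℂ)) * (p k μ : ℂ)) /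
              (∏ μ, (lam μ : ℂ))‖ * 1 := by
              exact mul_le_mul_of_nonneg_left hik (norm_nonneg _)
          _ = ∏ μ, (1 - lam μ) * p k μ / lam μ := by rw [mul_one, hck]
          _ ≤ ((1 - lmin) / lmin * pmax k) ^ (m + 1) := hterm
    _ = ((1 - lmin) / lmin) ^ (m + 1) * ∑ k, pmax k ^ (m + 1) := by
        rw [Finset.mul_sum]
        exact Finset.sum_congr rfl fun k _ => mul_pow _ _ _
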